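/- If λ_1, ..., λ_n are the roots of P_n (counted with multiplicity) and V is the matrix with entries V_{ij} = (c_n/c_{n-i+1}) λ_j^{i-1}, then Ĉ_g V = V D, where D = diag(λ_1, ..., λ_n). In particular, if the λ_j are pairwise distinct then V is invertible and V^{-1} Ĉ_g V = D. -/

import Mathlib

open Finset

/-- The `k`-th elementary symmetric function of `l 1, …, l n`. -/
def esymm (n : ℕ) (l : Fin n → ℝ) (k : ℕ) : ℝ :=
  ∑ s ∈ Finset.univ.powersetCard k, ∏ i ∈ s, l i

lemma vieta_eval (n : ℕ) (l : Fin n → ℝ) (x : ℝ) :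
    ∏ m : Fin n, (x - l m) = ∑ k ∈ range (n+1), (-1)^k * esymm n l k * x^(n-k) := by
  have h1 : ∀ m : Fin n, x - l m = (-l m) + x := by intro m; ring
  simp_rw [h1]
  rw [Finset.prod_add, Finset.sum_powerset]
  simp only [card_univ, Fintype.card_fin]
  refine Finset.sum_congr rfl fun k hk => ?_
  rw [esymm, Finset.mul_sum, Finset.sum_mul]
  refine Finset.sum_congr rfl fun t ht => ?_
  have htc : t.card = k := (Finset.mem_powersetCard.mp ht).2
  have hsub : t ⊆ univ := Finset.subset_univ t
  have hneg : ∏ i ∈ t, -l i = (-1)^k * ∏ i ∈ t, l i := by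
    simp_rw [neg_eq_neg_one_mul (l _)]
    rw [Finset.prod_mul_distrib, Finset.prod_const, htc]
  rw [Finset.prod_const, Finset.card_sdiff_of_subset hsub, card_univ, Fintype.card_fin, htc, hneg]

lemma esymm_zero (n : ℕ) (l : Fin n → ℝ) : esymm n l 0 = 1 := by
  simp [esymm]

-- root identity: for a root x = l j, x^n = ∑_{k : Fin n} p (n - k) x^k
lemma root_sum (n : ℕ) (l : Fin n → ℝ) (p : ℕ → ℝ)
    (hp : ∀ i, p i = (-1 : ℝ) ^ (i + 1) * esymm n l i) (j : Fin n) :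
    ∑ k : Fin n, p (n - k.val) * l j ^ k.val = l j ^ n := by
  set x := l j with hx
  have hroot : ∏ m : Fin n, (x - l m) = 0 :=
    Finset.prod_eq_zero (Finset.mem_univ j) (by simp [hx])
  rw [vieta_eval, Finset.sum_range_succ'] at hroot
  simp only [esymm_zero, pow_zero, Nat.sub_zero, one_mul, mul_one] at hroot
  have key : x ^ n = ∑ k ∈ range n, (-1 : ℝ)^(k+1+1) * esymm n l (k+1) * x^(n-(k+1)) := by
    have h2 : ∀ k, (-1 : ℝ)^(k+1+1) * esymm n l (k+1) * x^(n-(k+1))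
        = -((-1 : ℝ)^(k+1) * esymm n l (k+1) * x^(n-(k+1))) := fun k => by ring
    simp_rw [h2, Finset.sum_neg_distrib]
    linarith [hroot]
  rw [Fin.sum_univ_eq_sum_range (fun k => p (n - k) * x ^ k) n]
  rw [← Finset.sum_range_reflect]
  rw [key]
  refine Finset.sum_congr rfl fun k hk => ?_
  have hk' : k < n := Finset.mem_range.mp hk
  have h3 : n - (n - 1 - k) = k + 1 := by omega
  have h4 : n - (k+1) = n - 1 - k := by omega
  rw [h3, h4, hp]


/-- The generalized companion matrix `Ĉ_g`. -/
noncomputable def genCompanion (n : ℕ) (p c : ℕ → ℝ) : Matrix (Fin n) (Fin n) ℝ :=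
  Matrix.of fun i j =>
    if i.val = n - 1 then c (n - j.val) * p (n - j.val)
    else if j.val = i.val + 1 then c (n - i.val - 1) / c (n - i.val)
    else 0

/-- If `λ_1, …, λ_n` are the roots of `P_n` (with multiplicity), `p_i = (-1)^{i-1} σ_i`,
and `V_{ij} = (c_n / c_{n-i+1}) λ_j^{i-1}`, then `Ĉ_g V = V D` with
`D = diag(λ_1, …, λ_n)`; if the `λ_j` are pairwise distinct then `V` is invertible and
`V⁻¹ Ĉ_g V = D`. -/
theorem genCompanion_conjugation (n : ℕ) (hn : 1 < n) (l : Fin n → ℝ)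
    (p c : ℕ → ℝ) (hp : ∀ i, p i = (-1 : ℝ) ^ (i + 1) * esymm n l i)
    (hc1 : c 1 = 1) (hc : ∀ i, 2 ≤ i → i ≤ n → c i ≠ 0)
    (V : Matrix (Fin n) (Fin n) ℝ)
    (hV : ∀ i j : Fin n, V i j = (c n / c (n - i.val)) * l j ^ i.val)
    (D : Matrix (Fin n) (Fin n) ℝ) (hD : D = Matrix.diagonal l) :
    genCompanion n p c * V = V * D ∧
      (Function.Injective l → IsUnit V.det ∧ V⁻¹ * genCompanion n p c * V = D) := by
  have hcz : ∀ m, 1 ≤ m → m ≤ n → c m ≠ 0 := by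
    intro m h1 h2
    rcases eq_or_lt_of_le h1 with h | h
    · rw [← h, hc1]; exact one_ne_zero
    · exact hc m h h2
  have hmain : genCompanion n p c * V = V * D := by
    ext i j
    rw [Matrix.mul_apply, hD, Matrix.mul_diagonal]
    simp only [genCompanion]
    by_cases h : i.val = n - 1
    · simp only [Matrix.of_apply, if_pos h]
      have hterm : ∀ k : Fin n, c (n - k.val) * p (n - k.val) * V k j
          = c n * (p (n - k.val) * l j ^ k.val) := by
        intro k
        have hk1 : 1 ≤ n - k.val := by omega
        have hk2 : n - k.val ≤ n := by omega
        rw [hV]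
        field_simp [hcz _ hk1 hk2]
      simp_rw [hterm]
      rw [← Finset.mul_sum, root_sum n l p hp j, hV]
      have h1 : n - i.val = 1 := by omega
      have h2 : i.val = n - 1 := h
      rw [h1, hc1, h2]
      have : l j ^ (n - 1) * l j = l j ^ n := by
        rw [← pow_succ]; congr 1; omega
      rw [div_one, mul_assoc, this]
    · have hi : i.val + 1 < n := by omega
      set k0 : Fin n := ⟨i.val + 1, hi⟩ with hk0
      have hsum : ∑ k : Fin n,
          (Matrix.of fun i j : Fin n =>
            if i.val = n - 1 then c (n - j.val) * p (n - j.val)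
            else if j.val = i.val + 1 then c (n - i.val - 1) / c (n - i.val)
            else 0) i k * V k j
          = (c (n - i.val - 1) / c (n - i.val)) * V k0 j := by
        rw [Finset.sum_eq_single k0]
        · simp [Matrix.of_apply, if_neg h, hk0]
        · intro k _ hk
          have : k.val ≠ i.val + 1 := fun hkv => hk (Fin.ext hkv)
          simp only [Matrix.of_apply, if_neg h, if_neg this, zero_mul]
        · intro hk; exact absurd (Finset.mem_univ k0) hk
      rw [hsum, hV, hV]
      have e1 : n - k0.val = n - i.val - 1 := by simp [hk0]; omega
      rw [e1]
      have h1 : 1 ≤ n - i.val - 1 := by omega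
      have h2 : n - i.val - 1 ≤ n := by omega
      have h3 : 1 ≤ n - i.val := by omega
      have h4 : n - i.val ≤ n := by omega
      have hpow : l j ^ k0.val = l j ^ i.val * l j := by
        simp [hk0, pow_succ]
      rw [hpow]
      field_simp [hcz _ h1 h2, hcz _ h3 h4]
  refine ⟨hmain, fun hinj => ?_⟩
  have hdet : V = Matrix.diagonal (fun i : Fin n => c n / c (n - i.val)) *
      (Matrix.vandermonde l).transpose := by
    ext i j
    rw [Matrix.diagonal_mul, Matrix.transpose_apply, hV]
    simp [Matrix.vandermonde]
  have hdn : V.det ≠ 0 := by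
    rw [hdet, Matrix.det_mul, Matrix.det_transpose, Matrix.det_vandermonde,
      Matrix.det_diagonal]
    refine mul_ne_zero (Finset.prod_ne_zero_iff.mpr fun i _ => ?_)
      (Finset.prod_ne_zero_iff.mpr fun i _ => Finset.prod_ne_zero_iff.mpr fun j hj => ?_)
    · have h1 : 1 ≤ n - i.val := by omega
      have h2 : n - i.val ≤ n := by omega
      exact div_ne_zero (hcz n (by omega) le_rfl) (hcz _ h1 h2)
    · have : j ≠ i := by
        intro hji
        simp [hji] at hj
      exact sub_ne_zero_of_ne fun hl => this (hinj hl)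
  have hu : IsUnit V.det := isUnit_iff_ne_zero.mpr hdn
  refine ⟨hu, ?_⟩
  rw [mul_assoc, hmain, ← mul_assoc, Matrix.nonsing_inv_mul V hu, one_mul]
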